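/- The Thue-Morse sequence u is overlap-free: u contains no factor of the form a w a w a, where a is a single letter and w is a (possibly empty) finite word. -/

import Mathlib

open Fin.NatCast

def tm (n : ℕ) : Fin 2 := ((Nat.digits 2 n).count 1 : Fin 2)

lemma tm_even (n : ℕ) : tm (2 * n) = tm n := by
  rcases Nat.eq_zero_or_pos n with h | h
  · simp [h]
  · unfold tm
    rw [Nat.digits_def' (by norm_num : (1:ℕ) < 2) (by omega)]
    have h1 : 2 * n % 2 = 0 := by omega
    have h2 : 2 * n / 2 = n := by omega
    rw [h1, h2]
    simp

lemma tm_odd (n : ℕ) : tm (2 * n + 1) = tm n + 1 := by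
  unfold tm
  rw [Nat.digits_def' (by norm_num : (1:ℕ) < 2) (by omega)]
  have h1 : (2 * n + 1) % 2 = 1 := by omega
  have h2 : (2 * n + 1) / 2 = n := by omega
  rw [h1, h2]
  simp [List.count_cons]

lemma noaaa (n : ℕ) : ¬ (tm n = tm (n + 1) ∧ tm (n + 1) = tm (n + 2)) := by
  have key : ∀ a : Fin 2, a ≠ a + 1 := by decide
  rintro ⟨h1, h2⟩
  rcases Nat.even_or_odd n with ⟨m, hm⟩ | ⟨m, hm⟩
  · have e1 : n = 2 * m := by omega
    have e2 : n + 1 = 2 * m + 1 := by omega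
    rw [e2, e1, tm_even, tm_odd] at h1
    exact key _ h1
  · have e1 : n + 1 = 2 * (m + 1) := by omega
    have e2 : n + 2 = 2 * (m + 1) + 1 := by omega
    rw [e2, e1, tm_even, tm_odd] at h2
    exact key _ h2

lemma key : ∀ p, 1 ≤ p → ∀ i, ¬ (∀ k ≤ p, tm (i + k) = tm (i + p + k)) := by
  intro p
  induction p using Nat.strong_induction_on with
  | _ p ih =>
  intro hp i h
  rcases Nat.even_or_odd p with ⟨q, hq⟩ | ⟨q, hq⟩
  · -- p = q + q, even case: reduce to period q
    have hq1 : 1 ≤ q := by omega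
    rcases Nat.even_or_odd i with ⟨j, hj⟩ | ⟨j, hj⟩
    · refine ih q (by omega) hq1 j (fun t ht => ?_)
      have := h (2 * t) (by omega)
      have e1 : i + 2 * t = 2 * (j + t) := by omega
      have e2 : i + p + 2 * t = 2 * (j + q + t) := by omega
      rw [e1, e2, tm_even, tm_even] at this
      exact this
    · refine ih q (by omega) hq1 j (fun t ht => ?_)
      have := h (2 * t) (by omega)
      have e1 : i + 2 * t = 2 * (j + t) + 1 := by omega
      have e2 : i + p + 2 * t = 2 * (j + q + t) + 1 := by omega
      rw [e1, e2, tm_odd, tm_odd] at this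
      exact add_right_cancel this
  · -- p = 2q+1, odd case: direct contradiction
    rcases Nat.eq_zero_or_pos q with hq0 | hq1
    · -- p = 1
      subst hq0
      refine noaaa i ⟨?_, ?_⟩
      · have := h 0 (by omega)
        have e1 : i + 0 = i := by omega
        have e2 : i + p + 0 = i + 1 := by omega
        rw [e1, e2] at this; exact this
      · have := h 1 (by omega)
        have e2 : i + p + 1 = i + 2 := by omega
        rw [e2] at this; exact this
    · have fin2 : ∀ a b c d e : Fin 2,
          a = c + 1 → a + 1 = d → b = d + 1 → b + 1 = e → c = d ∧ d = e := by decide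
      rcases Nat.even_or_odd i with ⟨m, hm⟩ | ⟨m, hm⟩
      · -- i even
        have h0 : tm m = tm (m + q) + 1 := by
          have := h 0 (by omega)
          have e1 : i + 0 = 2 * m := by omega
          have e2 : i + p + 0 = 2 * (m + q) + 1 := by omega
          rw [e1, e2, tm_even, tm_odd] at this; exact this
        have h1 : tm m + 1 = tm (m + q + 1) := by
          have := h 1 (by omega)
          have e1 : i + 1 = 2 * m + 1 := by omega
          have e2 : i + p + 1 = 2 * (m + q + 1) := by omega
          rw [e1, e2, tm_odd, tm_even] at this; exact this
        have h2 : tm (m + 1) = tm (m + q + 1) + 1 := by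
          have := h 2 (by omega)
          have e1 : i + 2 = 2 * (m + 1) := by omega
          have e2 : i + p + 2 = 2 * (m + q + 1) + 1 := by omega
          rw [e1, e2, tm_even, tm_odd] at this; exact this
        have h3 : tm (m + 1) + 1 = tm (m + q + 2) := by
          have := h 3 (by omega)
          have e1 : i + 3 = 2 * (m + 1) + 1 := by omega
          have e2 : i + p + 3 = 2 * (m + q + 2) := by omega
          rw [e1, e2, tm_odd, tm_even] at this; exact this
        have := fin2 (tm m) (tm (m + 1)) (tm (m + q)) (tm (m + q + 1)) (tm (m + q + 2))
          h0 h1 h2 h3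
        have e : m + q + 1 + 1 = m + q + 2 := by omega
        exact noaaa (m + q) ⟨this.1, by rw [e]; exact this.2⟩
      · -- i odd
        have h0 : tm m + 1 = tm (m + q + 1) := by
          have := h 0 (by omega)
          have e1 : i + 0 = 2 * m + 1 := by omega
          have e2 : i + p + 0 = 2 * (m + q + 1) := by omega
          rw [e1, e2, tm_odd, tm_even] at this; exact this
        have h1 : tm (m + 1) = tm (m + q + 1) + 1 := by
          have := h 1 (by omega)
          have e1 : i + 1 = 2 * (m + 1) := by omega
          have e2 : i + p + 1 = 2 * (m + q + 1) + 1 := by omega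
          rw [e1, e2, tm_even, tm_odd] at this; exact this
        have h2 : tm (m + 1) + 1 = tm (m + q + 2) := by
          have := h 2 (by omega)
          have e1 : i + 2 = 2 * (m + 1) + 1 := by omega
          have e2 : i + p + 2 = 2 * (m + q + 2) := by omega
          rw [e1, e2, tm_odd, tm_even] at this; exact this
        have h3 : tm (m + 2) = tm (m + q + 2) + 1 := by
          have := h 3 (by omega)
          have e1 : i + 3 = 2 * (m + 2) := by omega
          have e2 : i + p + 3 = 2 * (m + q + 2) + 1 := by omega
          rw [e1, e2, tm_even, tm_odd] at this; exact this
        have := fin2 (tm (m + q + 1)) (tm (m + q + 2)) (tm m) (tm (m + 1)) (tm (m + 2))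
          (by rw [← h0]) (by rw [h1]) (by rw [← h2]) (by rw [h3])
        exact noaaa m ⟨this.1, this.2⟩

/-- The Thue-Morse sequence is overlap-free: it contains no factor of the
form `a w a w a`, i.e. no factor of length `2p+1` with period `p ≥ 1`. -/
theorem thue_morse_overlap_free :
    ¬ ∃ (i p : ℕ), 1 ≤ p ∧ ∀ k ≤ p, tm (i + k) = tm (i + p + k) := by
  rintro ⟨i, p, hp, h⟩
  exact key p hp i h
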